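/- arXiv:2205.07920 — 2 statements merged into one kernel-verified Lean document; each statement's English description precedes it below -/
import Mathlib

section
/- Let m ≥ 2, d ≥ 1, and let the level-hypervector set {L_1,…,L_m} be generated as follows: L_1 and L_m are independent uniform samples from {0,1}^d, Φ is an independent uniform sample from [0,1]^d, and for 2 ≤ l ≤ m−1 and each coordinate k, L_l(k) = L_1(k) if Φ(k) < (m−l)/(m−1), and L_l(k) = L_m(k) otherwise. Then for all 1 ≤ i < j ≤ m, the expected normalized Hamming distance satisfies E[δ(L_i, L_j)] = (j−i)/(2(m−1)). -/
open MeasureTheory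

/-- Normalized Hamming distance on `{0,1}^d`. -/
noncomputable def hdelta (d : ℕ) (x y : Fin d → Bool) : ℝ :=
  (Finset.univ.filter fun k => x k ≠ y k).card / d

/-- Sample space: `(L₁, Lₘ)` together with the filter `Φ`. -/
abbrev Omega (d : ℕ) := ((Fin d → Bool) × (Fin d → Bool)) × (Fin d → ℝ)

/-- Uniform measure: `L₁, Lₘ` uniform on `{0,1}^d`, `Φ` uniform on `[0,1]^d`,
all independent. -/
noncomputable def levelMeasure (d : ℕ) : Measure (Omega d) :=
  ((PMF.uniformOfFintype (Fin d → Bool)).toMeasure.prod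
    (PMF.uniformOfFintype (Fin d → Bool)).toMeasure).prod
    (Measure.pi fun _ : Fin d => volume.restrict (Set.Icc (0 : ℝ) 1))

/-- The level-hypervector `L_l` of Algorithm 1:
`L_l(k) = L₁(k)` if `Φ(k) < (m-l)/(m-1)`, else `L_l(k) = Lₘ(k)`. -/
noncomputable def levelHV (d m : ℕ) (l : ℕ) (ω : Omega d) : Fin d → Bool :=
  fun k => if ω.2 k < ((m : ℝ) - l) / ((m : ℝ) - 1) then ω.1.1 k else ω.1.2 k

section Aux

variable {d : ℕ}


lemma card_filter_eval (k : Fin d) (b : Bool) :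
    (Finset.univ.filter fun x : Fin d → Bool => x k = b).card = 2 ^ (d - 1) := by
  classical
  have hswap : ∀ b : Bool,
      (Finset.univ.filter fun x : Fin d → Bool => x k = b).card =
      (Finset.univ.filter fun x : Fin d → Bool => x k = !b).card := by
    intro b
    apply Finset.card_bij (fun x _ => Function.update x k (!b))
    · intro x hx
      simp [Function.update_apply]
    · intro x hx y hy hxy
      simp only [Finset.mem_filter] at hx hy
      funext t
      by_cases ht : t = k
      · rw [ht, hx.2, hy.2]
      · have := congrFun hxy t
        simpa [Function.update_apply, ht] using this
    · intro y hy
      simp only [Finset.mem_filter] at hy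
      refine ⟨Function.update y k b, by simp, ?_⟩
      funext t
      by_cases ht : t = k
      · subst ht; simp [hy.2]
      · simp [Function.update_apply, ht]
  have hsum : (Finset.univ.filter fun x : Fin d → Bool => x k = b).card +
      (Finset.univ.filter fun x : Fin d → Bool => x k = !b).card =
      Fintype.card (Fin d → Bool) := by
    rw [← Finset.card_union_of_disjoint]
    · rw [← Finset.card_univ]
      congr 1
      ext x
      simp only [Finset.mem_union, Finset.mem_filter, Finset.mem_univ, true_and]
      cases hx : x k <;> cases b <;> simp
    · rw [Finset.disjoint_filter]
      intro x _ hx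
      simp [hx]
  have hd1' : 1 ≤ d := Nat.one_le_iff_ne_zero.mpr (by rintro rfl; exact k.elim0)
  have hcard : Fintype.card (Fin d → Bool) = 2 ^ d := by simp
  rw [hcard] at hsum
  rw [← hswap b] at hsum
  have h2 : 2 ^ d = 2 * 2 ^ (d - 1) := by
    calc 2 ^ d = 2 ^ (d - 1 + 1) := by rw [Nat.sub_add_cancel hd1']
    _ = 2 * 2 ^ (d - 1) := by rw [pow_succ]; ring
  clear hswap hcard
  rw [h2] at hsum
  linarith

lemma uniform_eval_measure (k : Fin d) (b : Bool) :
    (PMF.uniformOfFintype (Fin d → Bool)).toMeasure {x | x k = b} = 2⁻¹ := by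
  classical
  rw [PMF.toMeasure_apply_fintype]
  have h : ∀ x : Fin d → Bool,
      Set.indicator {x | x k = b} (⇑(PMF.uniformOfFintype (Fin d → Bool))) x =
      if x k = b then ((2 : ENNReal) ^ d)⁻¹ else 0 := by
    intro x
    by_cases hx : x k = b <;> simp [Set.indicator, hx, PMF.uniformOfFintype_apply]
  simp_rw [h]
  rw [← Finset.sum_filter, Finset.sum_const, card_filter_eval k b]
  have hd1 : 1 ≤ d := Nat.one_le_iff_ne_zero.mpr (by rintro rfl; exact k.elim0)
  have h2d : (2 : ENNReal) ^ d = 2 * 2 ^ (d - 1) := by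
    calc (2:ENNReal) ^ d = 2 ^ (d - 1 + 1) := by rw [Nat.sub_add_cancel hd1]
    _ = 2 * 2 ^ (d - 1) := by rw [pow_succ]; ring
  rw [h2d, nsmul_eq_mul]
  push_cast
  rw [ENNReal.mul_inv (by left; simp) (by left; simp), ← mul_assoc, mul_comm ((2:ENNReal)^(d-1)) 2⁻¹,
    mul_assoc, ENNReal.mul_inv_cancel (by positivity) (by simp), mul_one]


end Aux

theorem expected_distance_levels (d m : ℕ) (hd : 1 ≤ d) (hm : 2 ≤ m)
    (i j : ℕ) (hi : 1 ≤ i) (hij : i < j) (hj : j ≤ m) :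
    ∫ ω, hdelta d (levelHV d m i ω) (levelHV d m j ω) ∂(levelMeasure d)
      = ((j : ℝ) - i) / (2 * ((m : ℝ) - 1)) := by
  classical
  have hm1 : (0 : ℝ) < (m : ℝ) - 1 := by
    have h2 : (2 : ℝ) ≤ (m : ℝ) := by exact_mod_cast hm
    linarith
  set a : ℝ := ((m : ℝ) - i) / ((m : ℝ) - 1) with ha_def
  set b : ℝ := ((m : ℝ) - j) / ((m : ℝ) - 1) with hb_def
  have hij' : (i : ℝ) ≤ (j : ℝ) := by exact_mod_cast hij.le
  have hba : b ≤ a := by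
    rw [ha_def, hb_def, div_le_div_iff₀ hm1 hm1]
    nlinarith
  have hb0 : 0 ≤ b := by
    apply div_nonneg _ hm1.le
    have : (j : ℝ) ≤ (m : ℝ) := by exact_mod_cast hj
    linarith
  have ha1 : a ≤ 1 := by
    rw [ha_def, div_le_one hm1]
    have : (1 : ℝ) ≤ (i : ℝ) := by exact_mod_cast hi
    linarith
  set E : Fin d → Set (Omega d) := fun k =>
    ({p : (Fin d → Bool) × (Fin d → Bool) | p.1 k ≠ p.2 k}) ×ˢ
      {φ : Fin d → ℝ | φ k ∈ Set.Ico b a} with hE_def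
  have hmemE : ∀ (k : Fin d) (ω : Omega d),
      (levelHV d m i ω k ≠ levelHV d m j ω k) ↔ ω ∈ E k := by
    intro k ω
    simp only [hE_def, Set.mem_prod, Set.mem_setOf_eq, Set.mem_Ico, levelHV, ← ha_def, ← hb_def]
    by_cases h1 : ω.2 k < b
    · have h2 : ω.2 k < a := lt_of_lt_of_le h1 hba
      simp [h1, h2, not_le.mpr h1]
    · by_cases h2 : ω.2 k < a
      · have hge : b ≤ ω.2 k := not_lt.mp h1
        simp only [h2, if_true, h1, if_false]
        tauto
      · simp [h1, h2, not_lt.mp h2]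
  have hS1 : ∀ k : Fin d,
      MeasurableSet {p : (Fin d → Bool) × (Fin d → Bool) | p.1 k ≠ p.2 k} := by
    intro k
    have heq : {p : (Fin d → Bool) × (Fin d → Bool) | p.1 k ≠ p.2 k} =
        (fun p : (Fin d → Bool) × (Fin d → Bool) => (p.1 k, p.2 k)) ⁻¹'
          {q : Bool × Bool | q.1 ≠ q.2} := rfl
    rw [heq]
    exact (((measurable_pi_apply k).comp measurable_fst).prodMk
      ((measurable_pi_apply k).comp measurable_snd)) ((Set.to_countable _).measurableSet)
  have hS2 : ∀ k : Fin d, MeasurableSet {φ : Fin d → ℝ | φ k ∈ Set.Ico b a} :=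
    fun k => (measurable_pi_apply k) measurableSet_Ico
  have hEmeas : ∀ k, MeasurableSet (E k) := fun k => (hS1 k).prod (hS2 k)
  haveI : IsProbabilityMeasure (volume.restrict (Set.Icc (0 : ℝ) 1)) :=
    ⟨by simp [Real.volume_Icc]⟩
  haveI hprob : IsProbabilityMeasure (levelMeasure d) := by
    unfold levelMeasure; infer_instance
  -- measure of each event
  have hS1val : ∀ k : Fin d,
      ((PMF.uniformOfFintype (Fin d → Bool)).toMeasure.prod
        (PMF.uniformOfFintype (Fin d → Bool)).toMeasure)
        {p : (Fin d → Bool) × (Fin d → Bool) | p.1 k ≠ p.2 k} = 2⁻¹ := by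
    intro k
    rw [Measure.prod_apply (hS1 k)]
    have hfib : ∀ x : Fin d → Bool,
        (Prod.mk x ⁻¹' {p : (Fin d → Bool) × (Fin d → Bool) | p.1 k ≠ p.2 k}) =
        {y : Fin d → Bool | y k = !(x k)} := by
      intro x
      ext y
      simp only [Set.mem_preimage, Set.mem_setOf_eq]
      cases hx : x k <;> cases hy : y k <;> simp [hx, hy]
    simp_rw [hfib, uniform_eval_measure]
    simp
  have hS2val : ∀ k : Fin d,
      (Measure.pi fun _ : Fin d => volume.restrict (Set.Icc (0 : ℝ) 1))
        {φ : Fin d → ℝ | φ k ∈ Set.Ico b a} = ENNReal.ofReal (a - b) := by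
    intro k
    have heq : {φ : Fin d → ℝ | φ k ∈ Set.Ico b a} =
        Function.eval k ⁻¹' (Set.Ico b a) := rfl
    rw [heq, Set.eval_preimage, Measure.pi_pi]
    rw [Finset.prod_eq_single k]
    · rw [Function.update_self, Measure.restrict_apply measurableSet_Ico]
      have : Set.Ico b a ∩ Set.Icc (0 : ℝ) 1 = Set.Ico b a := by
        apply Set.inter_eq_left.mpr
        intro x hx
        exact ⟨hb0.trans hx.1, hx.2.le.trans ha1⟩
      rw [this, Real.volume_Ico]
    · intro l _ hl
      rw [Function.update_of_ne hl]
      simp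
    · intro h; exact absurd (Finset.mem_univ k) h
  have hμE : ∀ k, levelMeasure d (E k) = 2⁻¹ * ENNReal.ofReal (a - b) := by
    intro k
    rw [levelMeasure, hE_def]
    rw [Measure.prod_prod, hS1val k, hS2val k]
  -- pointwise rewriting of the integrand
  have hpt : ∀ ω, hdelta d (levelHV d m i ω) (levelHV d m j ω)
      = (d : ℝ)⁻¹ * ∑ k, (E k).indicator (fun _ => (1 : ℝ)) ω := by
    intro ω
    rw [hdelta, Finset.card_filter, div_eq_inv_mul]
    congr 1
    push_cast
    apply Finset.sum_congr rfl
    intro k _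
    by_cases hk : ω ∈ E k
    · rw [Set.indicator_of_mem hk, if_pos ((hmemE k ω).mpr hk)]
    · rw [Set.indicator_of_notMem hk, if_neg (fun hc => hk ((hmemE k ω).mp hc))]
  have hint : ∀ k, Integrable ((E k).indicator fun _ => (1 : ℝ)) (levelMeasure d) :=
    fun k => (integrable_const 1).indicator (hEmeas k)
  have hintval : ∀ k, ∫ ω, (E k).indicator (fun _ => (1 : ℝ)) ω ∂(levelMeasure d)
      = 2⁻¹ * (a - b) := by
    intro k
    rw [integral_indicator_const _ (hEmeas k), smul_eq_mul, mul_one, measureReal_def, hμE k]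
    rw [ENNReal.toReal_mul, ENNReal.toReal_ofReal (by linarith)]
    norm_num
  simp_rw [hpt]
  rw [integral_const_mul, integral_finset_sum _ (fun k _ => hint k)]
  simp_rw [hintval]
  rw [Finset.sum_const, Finset.card_univ, Fintype.card_fin, nsmul_eq_mul]
  have hdne : (d : ℝ) ≠ 0 := by positivity
  rw [← mul_assoc, inv_mul_cancel₀ hdne, one_mul, ha_def, hb_def]
  field_simp
  ring
end

section
/- With the level-hypervector construction of Algorithm 1 (thresholds τ_l = (m−l)/(m−1)), for any coordinate k and any 1 ≤ i < j ≤ m, the probability that L_i(k) = L_j(k) equals 1 − (j−i)/(2(m−1)). -/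
open MeasureTheory

lemma card_eval_eq (d : ℕ) (k : Fin d) (c : Bool) :
    (Finset.univ.filter fun b : Fin d → Bool => b k = c).card = 2 ^ (d - 1) := by
  have hbij : (Finset.univ.filter fun b : Fin d → Bool => b k = c).card
      = (Finset.univ.filter fun b : Fin d → Bool => ¬ (b k = c)).card := by
    refine Finset.card_bij' (fun b _ => Function.update b k (!b k))
      (fun b _ => Function.update b k (!b k)) ?_ ?_ ?_ ?_
    · intro b hb
      simp only [Finset.mem_filter, Finset.mem_univ, true_and] at hb ⊢
      simp [Function.update_self, hb]
    · intro b hb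
      simp only [Finset.mem_filter, Finset.mem_univ, true_and] at hb ⊢
      simp only [Function.update_self]
      cases h : b k <;> simp_all
    · intro b _
      ext x
      by_cases hx : x = k <;> simp [hx, Function.update_self]
    · intro b _
      ext x
      by_cases hx : x = k <;> simp [hx, Function.update_self]
  have hcardu : (Finset.univ : Finset (Fin d → Bool)).card = 2 ^ d := by
    simp [Finset.card_univ]
  have hsum : (Finset.univ.filter fun b : Fin d → Bool => b k = c).card
      + (Finset.univ.filter fun b : Fin d → Bool => ¬ (b k = c)).card = 2 ^ d := by
    rw [← hcardu]
    exact Finset.card_filter_add_card_filter_not _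
  have hd : 1 ≤ d := Nat.one_le_iff_ne_zero.mpr (by rintro rfl; exact k.elim0)
  obtain ⟨e, rfl⟩ : ∃ e, d = e + 1 := ⟨d - 1, (Nat.succ_pred_eq_of_pos hd).symm⟩
  have h2 : 2 ^ (e + 1) = 2 * 2 ^ (e + 1 - 1) := by
    simp [pow_succ]; ring
  refine Nat.eq_of_mul_eq_mul_left (show 0 < 2 by norm_num) ?_
  rw [← h2, ← hsum, ← hbij]
  ring

lemma pmf_eval_eq (d : ℕ) (k : Fin d) (c : Bool) :
    (PMF.uniformOfFintype (Fin d → Bool)).toMeasure {b | b k = c} = 2⁻¹ := by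
  have hd : 1 ≤ d := Nat.one_le_iff_ne_zero.mpr (by rintro rfl; exact k.elim0)
  rw [PMF.toMeasure_apply_fintype]
  have heq : ∀ x : Fin d → Bool, ({b : Fin d → Bool | b k = c}).indicator
      (⇑(PMF.uniformOfFintype (Fin d → Bool))) x
      = if x k = c then ((2 : ENNReal) ^ d)⁻¹ else 0 := by
    intro x
    by_cases h : x k = c <;>
      simp [Set.indicator, h, PMF.uniformOfFintype_apply, Fintype.card_fun]
  simp only [heq]
  rw [← Finset.sum_filter, Finset.sum_const, card_eval_eq]
  rw [nsmul_eq_mul]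
  have h2 : (2 : ENNReal) ^ d = 2 ^ (d - 1) * 2 := by
    obtain ⟨e, rfl⟩ : ∃ e, d = e + 1 := ⟨d - 1, by omega⟩
    simp [pow_succ]
  rw [h2, ENNReal.mul_inv (by left; positivity) (by left; exact ENNReal.pow_ne_top (by norm_num)),
    ← mul_assoc]
  push_cast
  rw [ENNReal.mul_inv_cancel (by positivity) (ENNReal.pow_ne_top (by norm_num)), one_mul]

lemma diag_eval_eq (d : ℕ) (k : Fin d) :
    ((PMF.uniformOfFintype (Fin d → Bool)).toMeasure.prod
      (PMF.uniformOfFintype (Fin d → Bool)).toMeasure)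
      {p : (Fin d → Bool) × (Fin d → Bool) | p.1 k = p.2 k} = 2⁻¹ := by
  rw [Measure.prod_apply (Set.toFinite _).measurableSet]
  have : ∀ a : Fin d → Bool,
      (PMF.uniformOfFintype (Fin d → Bool)).toMeasure
        (Prod.mk a ⁻¹' {p : (Fin d → Bool) × (Fin d → Bool) | p.1 k = p.2 k}) = 2⁻¹ := by
    intro a
    have : (Prod.mk a ⁻¹' {p : (Fin d → Bool) × (Fin d → Bool) | p.1 k = p.2 k})
        = {b : Fin d → Bool | b k = a k} := by
      ext b; simp [eq_comm]
    rw [this, pmf_eval_eq]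
  simp only [this]
  simp [lintegral_const]

theorem prob_coordinates_agree (d m : ℕ) (hd : 1 ≤ d) (hm : 2 ≤ m)
    (i j : ℕ) (hi : 1 ≤ i) (hij : i < j) (hj : j ≤ m) (k : Fin d) :
    levelMeasure d {ω | levelHV d m i ω k = levelHV d m j ω k}
      = ENNReal.ofReal (1 - ((j : ℝ) - i) / (2 * ((m : ℝ) - 1))) := by
  have hr : (0 : ℝ) < (m : ℝ) - 1 := by
    have : (2 : ℝ) ≤ (m : ℝ) := by exact_mod_cast hm
    linarith
  set τi : ℝ := ((m : ℝ) - i) / ((m : ℝ) - 1) with hτidef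
  set τj : ℝ := ((m : ℝ) - j) / ((m : ℝ) - 1) with hτjdef
  have hji : (i : ℝ) < (j : ℝ) := by exact_mod_cast hij
  have hjm : (j : ℝ) ≤ (m : ℝ) := by exact_mod_cast hj
  have hi1 : (1 : ℝ) ≤ (i : ℝ) := by exact_mod_cast hi
  have hτji : τj ≤ τi := by
    exact (div_le_div_iff_of_pos_right hr).mpr (by linarith)
  have hτj0 : 0 ≤ τj := div_nonneg (by linarith) hr.le
  have hτi1 : τi ≤ 1 := by
    rw [hτidef, div_le_one hr]; linarith
  have hτi0 : 0 ≤ τi := le_trans hτj0 hτji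
  have hτj1 : τj ≤ 1 := le_trans hτji hτi1
  -- notation
  set μ2 := ((PMF.uniformOfFintype (Fin d → Bool)).toMeasure.prod
    (PMF.uniformOfFintype (Fin d → Bool)).toMeasure) with hμ2
  set ν := (Measure.pi fun _ : Fin d => volume.restrict (Set.Icc (0 : ℝ) 1)) with hν
  set T₁ : Set ((Fin d → Bool) × (Fin d → Bool)) := {p | p.1 k = p.2 k} with hT₁
  set A : Set ℝ := Set.Iio τj ∪ Set.Ici τi with hA
  set T₂ : Set (Fin d → ℝ) := (fun φ => φ k) ⁻¹' A with hT₂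
  have hAm : MeasurableSet A := measurableSet_Iio.union measurableSet_Ici
  have hT₂m : MeasurableSet T₂ := hAm.preimage (measurable_pi_apply k)
  have hT₁m : MeasurableSet T₁ := (Set.toFinite T₁).measurableSet
  -- the event as a union of rectangles
  have hset : {ω : Omega d | levelHV d m i ω k = levelHV d m j ω k}
      = (T₁ ×ˢ Set.univ) ∪ (Set.univ ×ˢ T₂) := by
    ext ⟨⟨a, b⟩, φ⟩
    simp only [levelHV, Set.mem_setOf_eq, Set.mem_union, Set.mem_prod, Set.mem_univ,
      and_true, true_and, hT₁, hT₂, hA, Set.mem_preimage, Set.mem_Iio, Set.mem_Ici,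
      Set.mem_union]
    rw [← hτidef, ← hτjdef]
    by_cases h1 : φ k < τi
    · by_cases h2 : φ k < τj
      · simp [h1, h2]
      · simp only [h1, h2, if_true, if_false]
        constructor
        · exact fun h => Or.inl h
        · rintro (h | h | h)
          · exact h
          · exact h.elim
          · exact absurd h (not_le.mpr h1)
    · have h2 : ¬ φ k < τj := fun hc => h1 (lt_of_lt_of_le hc hτji)
      simp [h1, h2, not_lt.mp h1]
  -- ν is a probability measure
  have hνuniv : ν Set.univ = 1 := by
    rw [hν, ← Set.pi_univ, Measure.pi_pi]
    simp [Real.volume_Icc]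
  -- measure of T₂
  have hνT₂ : ν T₂ = ENNReal.ofReal τj + ENNReal.ofReal (1 - τi) := by
    have hT2pi : T₂ = Set.univ.pi (fun i' => if i' = k then A else Set.univ) := by
      ext φ
      simp only [hT₂, Set.mem_preimage, Set.mem_univ_pi]
      constructor
      · intro h i'
        by_cases hik : i' = k
        · subst hik; simpa using h
        · simp [hik]
      · intro h
        have := h k
        simpa using this
    rw [hT2pi, hν, Measure.pi_pi]
    have hfac : ∀ i' : Fin d, (volume.restrict (Set.Icc (0:ℝ) 1)) (if i' = k then A else Set.univ)
        = if i' = k then (volume.restrict (Set.Icc (0:ℝ) 1)) A else 1 := by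
      intro i'
      split_ifs with h
      · rfl
      · simp [Real.volume_Icc]
    simp only [hfac, Finset.prod_ite_eq', Finset.mem_univ, if_true]
    rw [Measure.restrict_apply hAm]
    have hAint : A ∩ Set.Icc (0:ℝ) 1 = Set.Ico 0 τj ∪ Set.Icc τi 1 := by
      ext x
      simp only [hA, Set.mem_inter_iff, Set.mem_union, Set.mem_Iio, Set.mem_Ici,
        Set.mem_Icc, Set.mem_Ico]
      constructor
      · rintro ⟨h | h, h0, h1⟩
        · exact Or.inl ⟨h0, h⟩
        · exact Or.inr ⟨h, h1⟩
      · rintro (⟨h0, h⟩ | ⟨h, h1⟩)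
        · exact ⟨Or.inl h, h0, by linarith⟩
        · exact ⟨Or.inr h, by linarith, h1⟩
    rw [hAint, measure_union ?_ measurableSet_Icc]
    · simp [Real.volume_Ico, Real.volume_Icc]
    · rw [Set.disjoint_left]
      rintro x ⟨_, hx⟩ ⟨hx', _⟩
      linarith
  -- compute via Fubini
  have hSm : MeasurableSet ((T₁ ×ˢ Set.univ) ∪ (Set.univ ×ˢ T₂)) :=
    (hT₁m.prod MeasurableSet.univ).union (MeasurableSet.univ.prod hT₂m)
  rw [hset]
  show (μ2.prod ν) _ = _
  rw [Measure.prod_apply hSm]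
  have hslice : ∀ p : (Fin d → Bool) × (Fin d → Bool),
      ν (Prod.mk p ⁻¹' ((T₁ ×ˢ Set.univ) ∪ (Set.univ ×ˢ T₂)))
        = if p ∈ T₁ then 1 else ν T₂ := by
    intro p
    by_cases h : p ∈ T₁
    · have : Prod.mk p ⁻¹' ((T₁ ×ˢ Set.univ) ∪ (Set.univ ×ˢ T₂)) = Set.univ := by
        ext φ; simp [h]
      rw [this, hνuniv, if_pos h]
    · have : Prod.mk p ⁻¹' ((T₁ ×ˢ Set.univ) ∪ (Set.univ ×ˢ T₂)) = T₂ := by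
        ext φ; simp [h]
      rw [this, if_neg h]
  simp only [hslice]
  have hind : ∀ p : (Fin d → Bool) × (Fin d → Bool),
      (if p ∈ T₁ then (1 : ENNReal) else ν T₂)
        = T₁.indicator (fun _ => (1 : ENNReal)) p + T₁ᶜ.indicator (fun _ => ν T₂) p := by
    intro p
    by_cases h : p ∈ T₁ <;> simp [Set.indicator_apply, h]
  simp only [hind]
  rw [lintegral_add_left ((measurable_const (a := (1:ENNReal))).indicator hT₁m)]
  rw [lintegral_indicator hT₁m, lintegral_indicator hT₁m.compl]
  rw [setLIntegral_one, setLIntegral_const]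
  have hμT₁ : μ2 T₁ = 2⁻¹ := diag_eval_eq d k
  have hμT₁c : μ2 T₁ᶜ = 2⁻¹ := by
    rw [measure_compl hT₁m (measure_ne_top _ _), hμT₁]
    rw [measure_univ]
    exact ENNReal.one_sub_inv_two
  rw [hμT₁, hμT₁c, hνT₂]
  -- final arithmetic
  have h1τi : (0:ℝ) ≤ 1 - τi := by linarith
  rw [← ENNReal.ofReal_add hτj0 h1τi]
  have h2inv : (2 : ENNReal)⁻¹ = ENNReal.ofReal 2⁻¹ := by
    rw [ENNReal.ofReal_inv_of_pos (by norm_num : (0:ℝ) < 2)]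
    norm_num
  rw [h2inv, ← ENNReal.ofReal_mul (by linarith)]
  rw [← ENNReal.ofReal_add (by positivity) (by positivity)]
  congr 1
  rw [hτjdef, hτidef]
  field_simp
  ring
end
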